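/- arXiv:1711.04104 — 6 statements merged into one kernel-verified Lean document; each statement's English description precedes it below -/
import Mathlib

section
/- If there exists a nonzero matrix X in F^{r×s} with AX = XB, then the characteristic polynomials of A and B have a nontrivial common factor (i.e., gcd(c_A(t), c_B(t)) ≠ 1). -/
open Matrix Polynomial

private lemma pow_intertwine {F : Type*} [Field F] {r s : ℕ}
    {A : Matrix (Fin r) (Fin r) F} {B : Matrix (Fin s) (Fin s) F}
    {X : Matrix (Fin r) (Fin s) F} (hAB : A * X = X * B) (n : ℕ) :
    A ^ n * X = X * B ^ n := by
  induction n with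
  | zero => simp
  | succ n ih =>
    rw [pow_succ, pow_succ, Matrix.mul_assoc, hAB, ← Matrix.mul_assoc, ih, Matrix.mul_assoc]

private lemma aeval_intertwine {F : Type*} [Field F] {r s : ℕ}
    {A : Matrix (Fin r) (Fin r) F} {B : Matrix (Fin s) (Fin s) F}
    {X : Matrix (Fin r) (Fin s) F} (hAB : A * X = X * B) (p : F[X]) :
    (aeval A p) * X = X * (aeval B p) := by
  induction p using Polynomial.induction_on' with
  | add p q hp hq => simp only [map_add]; rw [Matrix.add_mul, Matrix.mul_add, hp, hq]
  | monomial n a =>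
    simp only [aeval_monomial, Algebra.algebraMap_eq_smul_one, smul_mul_assoc,
      one_mul, mul_smul_comm]
    rw [Matrix.smul_mul, pow_intertwine hAB, Matrix.mul_smul]

theorem stmt0 {F : Type*} [Field F] {r s : ℕ}
    (A : Matrix (Fin r) (Fin r) F) (B : Matrix (Fin s) (Fin s) F)
    (h : ∃ X : Matrix (Fin r) (Fin s) F, X ≠ 0 ∧ A * X = X * B) :
    ¬ IsCoprime A.charpoly B.charpoly := by
  obtain ⟨X, hX, hAB⟩ := h
  rintro ⟨u, v, huv⟩
  have h1 : aeval B (u * A.charpoly + v * B.charpoly) = 1 := by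
    rw [huv]; simp
  have h2 : aeval B A.charpoly * aeval B u = 1 := by
    rw [map_add, _root_.map_mul, _root_.map_mul, Matrix.aeval_self_charpoly,
      mul_zero, add_zero] at h1
    rw [← _root_.map_mul, mul_comm, _root_.map_mul] at h1
    exact h1
  have h3 : X * aeval B A.charpoly = 0 := by
    rw [← aeval_intertwine hAB, Matrix.aeval_self_charpoly, Matrix.zero_mul]
  set C := aeval B u with hCdef
  have hC : aeval B A.charpoly * C = 1 := h2
  have : X = 0 := by
    calc X = X * (aeval B A.charpoly * C) := by rw [hC, Matrix.mul_one]
    _ = (X * aeval B A.charpoly) * C := by rw [Matrix.mul_assoc]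
    _ = 0 := by rw [h3, Matrix.zero_mul]
  exact hX this
end

section
/- If K is a field extension of F, A ∈ F^{r×r}, and B ∈ F^{s×s}, then the dimension over F of {X ∈ F^{r×s} : AX = XB} equals the dimension over K of {X ∈ K^{r×s} : AX = XB}. -/
open Matrix TensorProduct


/-- The intertwining code `C(A,B) = {X | A X = X B}` as a subspace of matrices. -/
def intertwiner (F : Type*) [Field F] {m n : Type*} [Fintype m] [Fintype n]
    (A : Matrix m m F) (B : Matrix n n F) : Submodule F (Matrix m n F) where
  carrier := {X | A * X = X * B}
  add_mem' := by
    intro X Y hX hY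
    simp only [Set.mem_setOf_eq] at *
    rw [Matrix.mul_add, Matrix.add_mul, hX, hY]
  zero_mem' := by simp [Set.mem_setOf_eq]
  smul_mem' := by
    intro c X hX
    simp only [Set.mem_setOf_eq] at *
    rw [Matrix.mul_smul, Matrix.smul_mul, hX]


section Aux

variable {F K : Type*} [Field F] [Field K] [Algebra F K]
variable {m n : Type*} [Fintype m] [Fintype n] [DecidableEq m] [DecidableEq n]

/-- The Sylvester operator `X ↦ A X - X B`. -/
def sylvester (F : Type*) [Field F] {m n : Type*} [Fintype m] [Fintype n]
    (A : Matrix m m F) (B : Matrix n n F) : Matrix m n F →ₗ[F] Matrix m n F where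
  toFun X := A * X - X * B
  map_add' X Y := by
    rw [Matrix.mul_add, Matrix.add_mul]; abel
  map_smul' c X := by
    rw [Matrix.mul_smul, Matrix.smul_mul, smul_sub, RingHom.id_apply]

lemma sylvester_apply (A : Matrix m m F) (B : Matrix n n F) (X : Matrix m n F) :
    sylvester F A B X = A * X - X * B := rfl

lemma intertwiner_eq_ker (A : Matrix m m F) (B : Matrix n n F) :
    intertwiner F A B = LinearMap.ker (sylvester F A B) := by
  ext X
  simp only [LinearMap.mem_ker, sylvester_apply, sub_eq_zero]
  exact Iff.rfl

/-- The base change equivalence for matrix spaces. -/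
noncomputable def tensorMatrixEquiv (F K : Type*) [Field F] [Field K] [Algebra F K]
    (m n : Type*) [Fintype m] [Fintype n] [DecidableEq m] [DecidableEq n] :
    K ⊗[F] Matrix m n F ≃ₗ[K] Matrix m n K :=
  Module.Basis.equiv (Algebra.TensorProduct.basis K (Matrix.stdBasis F m n)) (Matrix.stdBasis K m n)
    (Equiv.refl _)

lemma tensorMatrixEquiv_one_tmul (X : Matrix m n F) :
    tensorMatrixEquiv F K m n (1 ⊗ₜ X) = X.map (algebraMap F K) := by
  have h : ∀ X : Matrix m n F, tensorMatrixEquiv F K m n (1 ⊗ₜ X) = X.map (algebraMap F K) := by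
    let g1 : Matrix m n F →ₗ[F] Matrix m n K :=
      ((tensorMatrixEquiv F K m n).restrictScalars F).toLinearMap ∘ₗ
        TensorProduct.mk F K (Matrix m n F) 1
    let g2 : Matrix m n F →ₗ[F] Matrix m n K :=
      { toFun := fun X => X.map (algebraMap F K)
        map_add' := fun X Y => Matrix.map_add _ (map_add _) _ _
        map_smul' := fun c X => by
          ext i j
          simp [Matrix.map_apply, Algebra.smul_def] }
    have : g1 = g2 := by
      apply Module.Basis.ext (Matrix.stdBasis F m n)
      intro ij
      obtain ⟨i, j⟩ := ij
      have h1 : g1 (Matrix.stdBasis F m n (i, j)) = Matrix.stdBasis K m n (i, j) := by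
        show tensorMatrixEquiv F K m n (1 ⊗ₜ (Matrix.stdBasis F m n (i, j)))
          = Matrix.stdBasis K m n (i, j)
        rw [← Algebra.TensorProduct.basis_apply]
        exact Module.Basis.equiv_apply _ _ _ _
      rw [h1]
      show _ = (Matrix.stdBasis F m n (i, j)).map (algebraMap F K)
      rw [Matrix.stdBasis_eq_single, Matrix.stdBasis_eq_single]
      ext i' j'
      simp [Matrix.single, Matrix.map_apply, apply_ite (algebraMap F K)]
    intro X
    exact congrFun (congrArg (fun f => f.toFun) this) X
  exact h X

lemma tensorMatrixEquiv_tmul (k : K) (X : Matrix m n F) :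
    tensorMatrixEquiv F K m n (k ⊗ₜ X) = k • X.map (algebraMap F K) := by
  have : (k ⊗ₜ X : K ⊗[F] Matrix m n F) = k • (1 ⊗ₜ X) := by
    rw [TensorProduct.smul_tmul', smul_eq_mul, mul_one]
  rw [this, (tensorMatrixEquiv F K m n).map_smul, tensorMatrixEquiv_one_tmul]

lemma tensorMatrixEquiv_comm (A : Matrix m m F) (B : Matrix n n F) (x : K ⊗[F] Matrix m n F) :
    tensorMatrixEquiv F K m n (TensorProduct.AlgebraTensorModule.lTensor K K (sylvester F A B) x)
      = sylvester K (A.map (algebraMap F K)) (B.map (algebraMap F K))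
          (tensorMatrixEquiv F K m n x) := by
  induction x with
  | zero => simp only [LinearMap.map_zero, LinearEquiv.map_zero]
  | tmul k X =>
      rw [TensorProduct.AlgebraTensorModule.lTensor_tmul, tensorMatrixEquiv_tmul,
        tensorMatrixEquiv_tmul, sylvester_apply, sylvester_apply,
        Matrix.mul_smul, Matrix.smul_mul, ← smul_sub]
      congr 1
      rw [Matrix.map_sub _ (map_sub _), Matrix.map_mul, Matrix.map_mul]
  | add x y hx hy =>
      rw [LinearMap.map_add, LinearEquiv.map_add, hx, hy, LinearEquiv.map_add, LinearMap.map_add]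

end Aux

set_option synthInstance.maxHeartbeats 400000 in
theorem stmt3 {F K : Type*} [Field F] [Field K] [Algebra F K] {r s : ℕ}
    (A : Matrix (Fin r) (Fin r) F) (B : Matrix (Fin s) (Fin s) F) :
    Module.finrank F (intertwiner F A B)
      = Module.finrank K (intertwiner K (A.map (algebraMap F K)) (B.map (algebraMap F K))) := by
  classical
  set L := sylvester F A B with hL
  set L' := sylvester K (A.map (algebraMap F K)) (B.map (algebraMap F K)) with hL'
  set e := tensorMatrixEquiv F K (Fin r) (Fin s) with he
  set T := TensorProduct.AlgebraTensorModule.lTensor K K L with hT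
  have hker : LinearMap.ker L' = Submodule.map (e : K ⊗[F] Matrix (Fin r) (Fin s) F →ₗ[K] Matrix (Fin r) (Fin s) K) (LinearMap.ker T) := by
    ext Y
    rw [Submodule.mem_map_equiv, LinearMap.mem_ker, LinearMap.mem_ker]
    have hc : e (T (e.symm Y)) = L' (e (e.symm Y)) := tensorMatrixEquiv_comm A B _
    rw [e.apply_symm_apply] at hc
    constructor
    · intro h
      apply e.injective
      rw [hc, h, LinearEquiv.map_zero]
    · intro h
      rw [← hc, h, LinearEquiv.map_zero]
  have h1 : Module.finrank K (K ⊗[F] LinearMap.ker L) = Module.finrank K (LinearMap.ker T) :=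
    (LinearMap.tensorKerEquiv K K L).finrank_eq
  have h2 : Module.finrank K (K ⊗[F] LinearMap.ker L) = Module.finrank F (LinearMap.ker L) :=
    Module.finrank_baseChange
  rw [intertwiner_eq_ker, intertwiner_eq_ker, ← hL, ← hL', hker,
    LinearEquiv.finrank_map_eq, ← h1, h2]
end

section
/- Suppose A = A₁ ⊕ A₂ and B = B₁ ⊕ B₂ are block diagonal matrices such that the characteristic polynomials of A₁ and B₂ are coprime and the characteristic polynomials of A₂ and B₁ are coprime. Then dim C(A,B) = dim C(A₁,B₁) + dim C(A₂,B₂). -/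
open Matrix

open Polynomial

lemma aeval_mul_comm {F : Type*} [Field F] {m n : Type*} [Fintype m] [Fintype n]
    [DecidableEq m] [DecidableEq n]
    {A : Matrix m m F} {B : Matrix n n F} {X : Matrix m n F} (h : A * X = X * B)
    (p : F[X]) : (aeval A p) * X = X * (aeval B p) := by
  induction p using Polynomial.induction_on' with
  | add p q hp hq => simp [map_add, Matrix.add_mul, Matrix.mul_add, hp, hq]
  | monomial k a =>
    have hpow : ∀ j : ℕ, A ^ j * X = X * B ^ j := by
      intro j
      induction j with
      | zero => simp
      | succ j ih =>
        rw [pow_succ, pow_succ, Matrix.mul_assoc, h, ← Matrix.mul_assoc, ih, Matrix.mul_assoc]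
    simp only [aeval_monomial, Algebra.algebraMap_eq_smul_one, smul_mul_assoc, one_mul,
      Matrix.smul_mul, Matrix.mul_smul, hpow]

lemma eq_zero_of_coprime {F : Type*} [Field F] {m n : ℕ}
    {A : Matrix (Fin m) (Fin m) F} {B : Matrix (Fin n) (Fin n) F} {X : Matrix (Fin m) (Fin n) F}
    (hc : IsCoprime A.charpoly B.charpoly) (h : A * X = X * B) : X = 0 := by
  obtain ⟨u, v, huv⟩ := hc
  have h1 : X * aeval B A.charpoly = 0 := by
    rw [← aeval_mul_comm h, Matrix.aeval_self_charpoly, Matrix.zero_mul]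
  have h2 : aeval B B.charpoly = 0 := Matrix.aeval_self_charpoly B
  calc X = X * aeval B (u * A.charpoly + v * B.charpoly) := by rw [huv]; simp
    _ = 0 := by
      rw [mul_comm u, mul_comm v, map_add, _root_.map_mul, _root_.map_mul, Matrix.mul_add,
        ← Matrix.mul_assoc, h1, h2]
      simp

theorem stmt5 {F : Type*} [Field F] {r₁ r₂ s₁ s₂ : ℕ}
    (A₁ : Matrix (Fin r₁) (Fin r₁) F) (A₂ : Matrix (Fin r₂) (Fin r₂) F)
    (B₁ : Matrix (Fin s₁) (Fin s₁) F) (B₂ : Matrix (Fin s₂) (Fin s₂) F)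
    (h12 : IsCoprime A₁.charpoly B₂.charpoly) (h21 : IsCoprime A₂.charpoly B₁.charpoly) :
    Module.finrank F (intertwiner F (Matrix.fromBlocks A₁ 0 0 A₂) (Matrix.fromBlocks B₁ 0 0 B₂))
      = Module.finrank F (intertwiner F A₁ B₁) + Module.finrank F (intertwiner F A₂ B₂) := by
  have hmem : ∀ X : Matrix (Fin r₁ ⊕ Fin r₂) (Fin s₁ ⊕ Fin s₂) F,
      X ∈ intertwiner F (Matrix.fromBlocks A₁ 0 0 A₂) (Matrix.fromBlocks B₁ 0 0 B₂) ↔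
      (A₁ * X.toBlocks₁₁ = X.toBlocks₁₁ * B₁ ∧ A₁ * X.toBlocks₁₂ = X.toBlocks₁₂ * B₂) ∧
      (A₂ * X.toBlocks₂₁ = X.toBlocks₂₁ * B₁ ∧ A₂ * X.toBlocks₂₂ = X.toBlocks₂₂ * B₂) := by
    intro X
    show _ = _ ↔ _
    conv_lhs => rw [← Matrix.fromBlocks_toBlocks X]
    rw [Matrix.fromBlocks_multiply, Matrix.fromBlocks_multiply]
    simp only [Matrix.zero_mul, Matrix.mul_zero, add_zero, zero_add]
    rw [Matrix.fromBlocks_inj]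
    tauto
  let e : (intertwiner F (Matrix.fromBlocks A₁ 0 0 A₂) (Matrix.fromBlocks B₁ 0 0 B₂)) ≃ₗ[F]
      (intertwiner F A₁ B₁) × (intertwiner F A₂ B₂) :=
    { toFun := fun X => (⟨X.1.toBlocks₁₁, ((hmem X.1).mp X.2).1.1⟩,
        ⟨X.1.toBlocks₂₂, ((hmem X.1).mp X.2).2.2⟩)
      map_add' := fun X Y => rfl
      map_smul' := fun c X => rfl
      invFun := fun P => ⟨Matrix.fromBlocks P.1.1 0 0 P.2.1, by
        rw [hmem]
        simp only [Matrix.toBlocks_fromBlocks₁₁, Matrix.toBlocks_fromBlocks₁₂,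
          Matrix.toBlocks_fromBlocks₂₁, Matrix.toBlocks_fromBlocks₂₂, Matrix.mul_zero,
          Matrix.zero_mul, and_true, true_and]
        exact ⟨P.1.2, P.2.2⟩⟩
      left_inv := fun X => by
        ext1
        have h1 : X.1.toBlocks₁₂ = 0 :=
          eq_zero_of_coprime h12 ((hmem X.1).mp X.2).1.2
        have h2 : X.1.toBlocks₂₁ = 0 :=
          eq_zero_of_coprime h21 ((hmem X.1).mp X.2).2.1
        show Matrix.fromBlocks X.1.toBlocks₁₁ 0 0 X.1.toBlocks₂₂ = X.1
        rw [← h1, ← h2, Matrix.fromBlocks_toBlocks]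
      right_inv := fun P => by
        ext1 <;> [ext1; ext1] <;> simp }
  rw [e.finrank_eq, Module.finrank_prod]
end

section
/- For three partitions λ, μ, ν with conjugates λ', μ', ν', we have Σ_i Σ_j Σ_k min{λ_i, μ_j, ν_k} = Σ_{i≥1} λ'_i μ'_i ν'_i, where the sums on the left range over the nonzero parts of λ, μ, ν respectively. -/
/-- The `i`-th part of the conjugate of a partition given by its multiset of parts:
the number of parts that are `≥ i`. -/
def conjPart (lam : Multiset ℕ) (i : ℕ) : ℕ := (lam.filter (fun p => i ≤ p)).card


-- swap multiset-map-sum with finset sum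
lemma swap_sum {α β : Type*} (s : Multiset α) (t : Finset β) (f : α → β → ℕ) :
    (s.map fun a => ∑ b ∈ t, f a b).sum = ∑ b ∈ t, (s.map fun a => f a b).sum := by
  induction s using Multiset.induction with
  | empty => simp
  | cons a s ih => simp [ih, Finset.sum_add_distrib]

lemma prod_sum {α β : Type*} (s : Multiset α) (t : Multiset β) (f : α → ℕ) (g : β → ℕ) :
    ((s ×ˢ t).map fun p => f p.1 * g p.2).sum = (s.map f).sum * (t.map g).sum := by
  induction s using Multiset.induction with
  | empty => simp
  | cons a s ih =>
      simp [Multiset.cons_product, ih, add_mul, Multiset.map_map, Function.comp,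
        ← Multiset.sum_map_mul_left]

lemma ind_sum (s : Multiset ℕ) (i : ℕ) :
    (s.map fun a => if i ≤ a then 1 else 0).sum = conjPart s i := by
  induction s using Multiset.induction with
  | empty => simp [conjPart]
  | cons a s ih =>
      by_cases h : i ≤ a <;> simp [conjPart, Multiset.filter_cons, h, ih] <;>
        simp [conjPart] at ih <;> omega

lemma min_eq_sum (N a b c : ℕ) (ha : a ≤ N) :
    min a (min b c) = ∑ i ∈ Finset.Icc 1 N, if i ≤ a ∧ i ≤ b ∧ i ≤ c then 1 else 0 := by
  set m := min a (min b c) with hm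
  have : ∀ i, (i ≤ a ∧ i ≤ b ∧ i ≤ c) ↔ i ≤ m := by intro i; simp [hm]
  calc m = ∑ i ∈ Finset.Icc 1 N, if i ≤ m then 1 else 0 := by
          have hm' : m ≤ N := le_trans (min_le_left _ _) ha
          rw [Finset.sum_boole]
          have h2 : Finset.filter (fun i => i ≤ m) (Finset.Icc 1 N) = Finset.Icc 1 m := by
            ext i; simp; omega
          simp [h2]
    _ = _ := by apply Finset.sum_congr rfl; intro i _; simp [this i]

theorem stmt10 (lam mu nu : Multiset ℕ) :
    ((lam ×ˢ (mu ×ˢ nu)).map fun p => min p.1 (min p.2.1 p.2.2)).sum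
      = ∑ i ∈ Finset.Icc 1 (lam.sum), conjPart lam i * conjPart mu i * conjPart nu i := by
  have h1 : ((lam ×ˢ (mu ×ˢ nu)).map fun p => min p.1 (min p.2.1 p.2.2))
      = (lam ×ˢ (mu ×ˢ nu)).map (fun p => ∑ i ∈ Finset.Icc 1 lam.sum,
          if i ≤ p.1 ∧ i ≤ p.2.1 ∧ i ≤ p.2.2 then 1 else 0) := by
    apply Multiset.map_congr rfl
    intro p hp
    have hp1 : p.1 ∈ lam := (Multiset.mem_product.mp hp).1
    exact min_eq_sum _ _ _ _ (Multiset.single_le_sum (fun x _ => Nat.zero_le x) _ hp1)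
  rw [h1, swap_sum]
  apply Finset.sum_congr rfl
  intro i _
  have h2 : ((lam ×ˢ (mu ×ˢ nu)).map fun p =>
        if i ≤ p.1 ∧ i ≤ p.2.1 ∧ i ≤ p.2.2 then 1 else 0)
      = (lam ×ˢ (mu ×ˢ nu)).map fun p =>
          (fun a => if i ≤ a then 1 else 0) p.1 *
            ((fun q : ℕ × ℕ => (fun a => if i ≤ a then 1 else 0) q.1 *
              (fun a => if i ≤ a then 1 else 0) q.2) p.2) := by
    apply Multiset.map_congr rfl
    intro p _
    by_cases h : i ≤ p.1 <;> by_cases h' : i ≤ p.2.1 <;> by_cases h'' : i ≤ p.2.2 <;>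
      simp [h, h', h'']
  rw [h2]
  have h3 := prod_sum lam (mu ×ˢ nu) (fun a => if i ≤ a then 1 else 0)
    (fun q : ℕ × ℕ => (fun a => if i ≤ a then 1 else 0) q.1 *
      (fun a => if i ≤ a then 1 else 0) q.2)
  have h4 := prod_sum mu nu (fun a => if i ≤ a then 1 else 0) (fun a => if i ≤ a then 1 else 0)
  rw [h3, h4, ind_sum, ind_sum, ind_sum, mul_assoc]
end

section
/- Suppose 1 ≤ k ≤ min{r,s} and |F| ≥ k + 2. Then there exist A ∈ F^{r×r} and B ∈ F^{s×s} such that the subspace C(A,B) = {X : AX = XB} of F^{r×s} has dimension k and minimum Hamming weight (minimum number of nonzero entries of a nonzero element) equal to ⌊r/k⌋·s. -/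
open Matrix

/-- The Hamming weight of a matrix: the number of nonzero entries. -/
def hammingWt {F : Type*} [Field F] [DecidableEq F] {r s : ℕ}
    (X : Matrix (Fin r) (Fin s) F) : ℕ :=
  (Finset.univ.filter fun p : Fin r × Fin s => X p.1 p.2 ≠ 0).card


open Polynomial in
theorem exists_coeffs {F : Type*} [Field F] {s k : ℕ} (hk : 0 < k) (hks : k ≤ s)
    (l : Fin k → F) (lnz : ∀ u, l u ≠ 0) :
    ∃ a : Fin s → F, a ⟨0, by omega⟩ ≠ 0 ∧
      ∀ u, l u ^ s = ∑ j : Fin s, a j * l u ^ (j : ℕ) := by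
  set p : F[X] := (∏ u, (X - C (l u))) * (X - C (l ⟨0, hk⟩)) ^ (s - k) with hp
  have hmon : p.Monic :=
    (monic_prod_of_monic _ _ fun _ _ => monic_X_sub_C _).mul ((monic_X_sub_C _).pow _)
  have hdeg : p.natDegree = s := by
    rw [hp, (monic_prod_of_monic _ _ fun _ _ => monic_X_sub_C _).natDegree_mul
      ((monic_X_sub_C _).pow _), natDegree_pow, natDegree_X_sub_C,
      natDegree_prod_of_monic _ _ (fun _ _ => monic_X_sub_C _)]
    simp only [natDegree_X_sub_C, Finset.sum_const, Finset.card_univ, Fintype.card_fin,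
      smul_eq_mul, mul_one]
    omega
  refine ⟨fun j => -(p.coeff (j : ℕ)), ?_, ?_⟩
  · have h0 : p.coeff 0 = p.eval 0 := coeff_zero_eq_eval_zero p
    rw [neg_ne_zero, h0]
    simp only [ne_eq, neg_eq_zero, h0, hp, eval_mul, eval_pow, eval_prod, eval_sub, eval_X,
      eval_C, zero_sub]
    refine mul_ne_zero (Finset.prod_ne_zero_iff.mpr fun u _ => ?_) (pow_ne_zero (a := -l ⟨0, hk⟩) _ ?_) <;>
      simp [lnz _]
  · intro u
    have hev : p.eval (l u) = 0 := by
      rw [hp, eval_mul, eval_prod]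
      have h1 : (X - C (l u)).eval (l u) = 0 := by simp
      rw [Finset.prod_eq_zero (Finset.mem_univ u) h1, zero_mul]
    have h2 := p.eval_eq_sum_range (l u)
    rw [hdeg, Finset.sum_range_succ] at h2
    have hcs : p.coeff s = 1 := by rw [← hdeg]; exact hmon.coeff_natDegree
    rw [hcs, one_mul, hev] at h2
    rw [Fin.sum_univ_eq_sum_range (fun i => -(p.coeff i) * l u ^ i) s]
    have : ∑ i ∈ Finset.range s, -p.coeff i * l u ^ i
        = -∑ i ∈ Finset.range s, p.coeff i * l u ^ i := by
      rw [← Finset.sum_neg_distrib]; simp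
    rw [this]
    linear_combination -h2

theorem auxmain {F : Type*} [Field F] [DecidableEq F] {r s k q : ℕ}
    (hk : 0 < k) (hs : 0 < s) (hq : 0 < q) (hqk : q * k ≤ r) (hk1 : k = 1 → q = r)
    (l : Fin k → F) (lnz : ∀ u, l u ≠ 0)
    (a : Fin s → F) (ha0 : a ⟨0, hs⟩ ≠ 0)
    (hroot : ∀ u, l u ^ s = ∑ j : Fin s, a j * l u ^ (j : ℕ)) :
    ∃ (A : Matrix (Fin r) (Fin r) F) (B : Matrix (Fin s) (Fin s) F),
      Module.finrank F (intertwiner F A B) = k ∧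
      IsLeast {w | ∃ X ∈ intertwiner F A B, X ≠ 0 ∧ hammingWt X = w} (q * s) := by
  have htlt : ∀ i : Fin r, min ((i : ℕ) / q) (k - 1) < k := fun i => by
    have := Nat.min_le_right ((i : ℕ) / q) (k - 1); omega
  set t : Fin r → Fin k := fun i => ⟨min ((i : ℕ) / q) (k - 1), htlt i⟩ with ht
  have hleadlt : ∀ u : Fin k, q * (u : ℕ) < r := fun u => by
    have h2 : q * ((u : ℕ) + 1) ≤ q * k := Nat.mul_le_mul_left q u.isLt
    rw [Nat.mul_succ] at h2; omega
  set lead : Fin k → Fin r := fun u => ⟨q * (u : ℕ), hleadlt u⟩ with hlead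
  have htl : ∀ u, t (lead u) = u := by
    intro u
    apply Fin.ext
    show min ((q * (u : ℕ)) / q) (k - 1) = (u : ℕ)
    rw [Nat.mul_div_cancel_left _ hq]
    have := u.isLt; omega
  set A : Matrix (Fin r) (Fin r) F :=
    Matrix.of fun i i' => if i' = lead (t i) then l (t i) else 0 with hA
  set B : Matrix (Fin s) (Fin s) F :=
    Matrix.of fun j' j => if (j : ℕ) = s - 1 then a j'
      else if (j' : ℕ) = (j : ℕ) + 1 then 1 else 0 with hB
  have hAX : ∀ (X : Matrix (Fin r) (Fin s) F) i j,
      (A * X) i j = l (t i) * X (lead (t i)) j := by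
    intro X i j
    rw [Matrix.mul_apply, Finset.sum_eq_single (lead (t i))]
    · simp [hA]
    · intro b _ hb; simp [hA, hb]
    · simp
  have hXB_mid : ∀ (X : Matrix (Fin r) (Fin s) F) i (j : Fin s) (hne : (j : ℕ) ≠ s - 1),
      (X * B) i j = X i ⟨(j : ℕ) + 1, by have := j.isLt; omega⟩ := by
    intro X i j hne
    rw [Matrix.mul_apply, Finset.sum_eq_single (⟨(j : ℕ) + 1, by have := j.isLt; omega⟩ : Fin s)]
    · simp [hB, hne]
    · intro b _ hb
      have hbv : (b : ℕ) ≠ (j : ℕ) + 1 := fun h => hb (Fin.ext h)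
      simp [hB, hne, hbv]
    · simp
  have hXB_last : ∀ (X : Matrix (Fin r) (Fin s) F) i (j : Fin s), (j : ℕ) = s - 1 →
      (X * B) i j = ∑ j', X i j' * a j' := by
    intro X i j hj
    rw [Matrix.mul_apply]
    exact Finset.sum_congr rfl fun b _ => by simp [hB, hj]
  -- membership characterization
  have hmem : ∀ X : Matrix (Fin r) (Fin s) F, X ∈ intertwiner F A B ↔
      ∃ c : Fin k → F, ∀ i j, X i j = c (t i) * l (t i) ^ (j : ℕ) := by
    intro X
    constructor
    · intro hX
      have hX' : A * X = X * B := hX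
      have heq : ∀ i j, l (t i) * X (lead (t i)) j = (X * B) i j := by
        intro i j; rw [← hAX X i j, hX']
      have L1 : ∀ (u : Fin k) (n : ℕ) (hn : n < s),
          X (lead u) ⟨n, hn⟩ = X (lead u) ⟨0, hs⟩ * l u ^ n := by
        intro u n
        induction n with
        | zero => intro hn; simp
        | succ m ih =>
          intro hn
          have hm : m < s := by omega
          have hms : (((⟨m, hm⟩ : Fin s)) : ℕ) ≠ s - 1 := by simp; omega
          have e := heq (lead u) ⟨m, hm⟩
          rw [hXB_mid X (lead u) ⟨m, hm⟩ hms, htl u] at e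
          rw [show (⟨m + 1, hn⟩ : Fin s) = ⟨((⟨m, hm⟩ : Fin s) : ℕ) + 1,
            by have := (⟨m, hm⟩ : Fin s).isLt; omega⟩ from rfl]
          rw [← e, ih hm]
          ring
      have L2 : ∀ (i : Fin r) (n : ℕ) (hn : n + 1 < s),
          X i ⟨n + 1, hn⟩ = X (lead (t i)) ⟨0, hs⟩ * l (t i) ^ (n + 1) := by
        intro i n hn
        have hm : n < s := by omega
        have hms : (((⟨n, hm⟩ : Fin s)) : ℕ) ≠ s - 1 := by simp; omega
        have e := heq i ⟨n, hm⟩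
        rw [hXB_mid X i ⟨n, hm⟩ hms] at e
        rw [show (⟨n + 1, hn⟩ : Fin s) = ⟨((⟨n, hm⟩ : Fin s) : ℕ) + 1,
          by have := (⟨n, hm⟩ : Fin s).isLt; omega⟩ from rfl]
        rw [← e, L1 (t i) n hm]
        ring
      have L3 : ∀ i : Fin r, X i ⟨0, hs⟩ = X (lead (t i)) ⟨0, hs⟩ := by
        intro i
        have hs1 : s - 1 < s := by omega
        have e := heq i ⟨s - 1, hs1⟩
        rw [hXB_last X i ⟨s - 1, hs1⟩ rfl, L1 (t i) (s - 1) hs1] at e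
        have hsum1 : ∑ j' : Fin s, X i j' * a j'
            = X i ⟨0, hs⟩ * a ⟨0, hs⟩ + ∑ j' ∈ Finset.univ.erase ⟨0, hs⟩, X i j' * a j' :=
          (Finset.add_sum_erase _ _ (Finset.mem_univ _)).symm
        have hsum3 : ∑ j' ∈ Finset.univ.erase (⟨0, hs⟩ : Fin s), X i j' * a j'
            = X (lead (t i)) ⟨0, hs⟩ *
              ∑ j ∈ Finset.univ.erase (⟨0, hs⟩ : Fin s), a j * l (t i) ^ (j : ℕ) := by
          rw [Finset.mul_sum]
          refine Finset.sum_congr rfl fun j hj => ?_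
          have hj0 : (j : ℕ) ≠ 0 := by
            have := (Finset.mem_erase.mp hj).1
            simpa [Fin.ext_iff] using this
          have hj1 : ((j : ℕ) - 1) + 1 < s := by have := j.isLt; omega
          have hjeq : j = ⟨((j : ℕ) - 1) + 1, hj1⟩ := Fin.ext (by simp; omega)
          rw [hjeq, L2 i ((j : ℕ) - 1) hj1]
          ring
        have hsum2 : ∑ j : Fin s, a j * l (t i) ^ (j : ℕ)
            = a ⟨0, hs⟩ + ∑ j ∈ Finset.univ.erase (⟨0, hs⟩ : Fin s), a j * l (t i) ^ (j : ℕ) := by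
          rw [← Finset.add_sum_erase _ _ (Finset.mem_univ (⟨0, hs⟩ : Fin s))]
          simp
        have hpow : l (t i) * (X (lead (t i)) ⟨0, hs⟩ * l (t i) ^ (s - 1))
            = X (lead (t i)) ⟨0, hs⟩ *
              (a ⟨0, hs⟩ + ∑ j ∈ Finset.univ.erase (⟨0, hs⟩ : Fin s), a j * l (t i) ^ (j : ℕ)) := by
          rw [← hsum2, ← hroot (t i),
            show l (t i) * (X (lead (t i)) ⟨0, hs⟩ * l (t i) ^ (s - 1))
              = X (lead (t i)) ⟨0, hs⟩ * (l (t i) ^ (s - 1) * l (t i)) from by ring,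
            ← pow_succ]
          congr 2
          omega
        rw [hsum1, hsum3, hpow] at e
        have hz : (X i ⟨0, hs⟩ - X (lead (t i)) ⟨0, hs⟩) * a ⟨0, hs⟩ = 0 := by
          linear_combination -e
        rcases mul_eq_zero.mp hz with h | h
        · exact sub_eq_zero.mp h
        · exact absurd h ha0
      refine ⟨fun u => X (lead u) ⟨0, hs⟩, fun i j => ?_⟩
      rcases Nat.eq_zero_or_pos (j : ℕ) with h0 | hpos
      · have hj : j = ⟨0, hs⟩ := Fin.ext h0
        rw [hj]
        simpa using L3 i
      · have hj1 : ((j : ℕ) - 1) + 1 < s := by have := j.isLt; omega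
        have hjeq : j = ⟨((j : ℕ) - 1) + 1, hj1⟩ := Fin.ext (by simp; omega)
        rw [hjeq]
        exact L2 i ((j : ℕ) - 1) hj1
    · rintro ⟨c, hc⟩
      have : A * X = X * B := by
        ext i j
        rw [hAX]
        by_cases hj : (j : ℕ) = s - 1
        · rw [hXB_last X i j hj, hc (lead (t i)) j, htl]
          have hc' : ∑ j' : Fin s, X i j' * a j'
              = c (t i) * ∑ j' : Fin s, a j' * l (t i) ^ (j' : ℕ) := by
            rw [Finset.mul_sum]
            exact Finset.sum_congr rfl fun j' _ => by rw [hc i j']; ring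
          rw [hc', ← hroot (t i), hj,
            show l (t i) * (c (t i) * l (t i) ^ (s - 1))
              = c (t i) * (l (t i) ^ (s - 1) * l (t i)) from by ring, ← pow_succ]
          congr 2
          omega
        · rw [hXB_mid X i j hj, hc i _, hc (lead (t i)) j, htl]
          show l (t i) * (c (t i) * l (t i) ^ (j : ℕ)) = c (t i) * l (t i) ^ ((j : ℕ) + 1)
          rw [pow_succ]; ring
      exact this
  -- the parametrizing linear map
  let phi : (Fin k → F) →ₗ[F] Matrix (Fin r) (Fin s) F :=
    { toFun := fun c => Matrix.of fun i j => c (t i) * l (t i) ^ (j : ℕ)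
      map_add' := by intro c d; ext i j; simp [Matrix.of_apply]; ring
      map_smul' := by intro m c; ext i j; simp [Matrix.of_apply]; ring }
  have hphi : ∀ c i j, phi c i j = c (t i) * l (t i) ^ (j : ℕ) := fun _ _ _ => rfl
  have hrange : intertwiner F A B = LinearMap.range phi := by
    ext X
    rw [LinearMap.mem_range, hmem X]
    constructor
    · rintro ⟨c, hc⟩; exact ⟨c, by ext i j; exact (hc i j).symm⟩
    · rintro ⟨c, rfl⟩; exact ⟨c, fun i j => rfl⟩
  have hinj : Function.Injective phi := by
    intro c d hcd
    funext u
    have h2 := congrFun (congrFun hcd (lead u)) (⟨0, hs⟩ : Fin s)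
    rw [hphi, hphi, htl] at h2
    simpa using h2
  have hdim : Module.finrank F (intertwiner F A B) = k := by
    rw [hrange, LinearMap.finrank_range_of_inj hinj]
    simp [Module.finrank_pi]
  -- fiber cardinalities
  have hfiber_ge : ∀ u : Fin k, q ≤ (Finset.univ.filter fun i : Fin r => t i = u).card := by
    intro u
    have hlt2 : ∀ n : Fin q, q * (u : ℕ) + (n : ℕ) < r := by
      intro n
      have h2 : q * ((u : ℕ) + 1) ≤ q * k := Nat.mul_le_mul_left q u.isLt
      rw [Nat.mul_succ] at h2
      have := n.isLt; omega
    have hcard := Finset.card_le_card_of_injOn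
      (fun n : Fin q => (⟨q * (u : ℕ) + (n : ℕ), hlt2 n⟩ : Fin r)) (s := Finset.univ)
      (t := Finset.univ.filter fun i : Fin r => t i = u) ?_ ?_
    · simpa using hcard
    · intro n _
      simp only [Finset.mem_coe, Finset.mem_filter, Finset.mem_univ, true_and]
      apply Fin.ext
      show min ((q * (u : ℕ) + (n : ℕ)) / q) (k - 1) = (u : ℕ)
      rw [Nat.mul_add_div hq, Nat.div_eq_of_lt n.isLt]
      have := u.isLt; omega
    · intro n _ m _ h
      simp only [Fin.mk.injEq] at h
      exact Fin.ext (by omega)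
  have hfiber0 : (Finset.univ.filter fun i : Fin r => t i = ⟨0, hk⟩).card = q := by
    rcases Nat.lt_or_ge 1 k with hk2 | hk1'
    · -- k >= 2
      have hstep : (Finset.univ.filter fun i : Fin r => t i = ⟨0, hk⟩)
          = Finset.univ.filter fun i : Fin r => (i : ℕ) < q := by
        apply Finset.filter_congr
        intro i _
        rw [Fin.ext_iff]
        show min ((i : ℕ) / q) (k - 1) = 0 ↔ (i : ℕ) < q
        constructor
        · intro h
          have h2 : (i : ℕ) / q = 0 := by omega
          by_contra h3
          have h4 : 1 ≤ (i : ℕ) / q := (Nat.one_le_div_iff hq).mpr (by omega)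
          omega
        · intro h
          rw [Nat.div_eq_of_lt h]
          omega
      have hq_le_r : q ≤ r := by
        have : q * 1 ≤ q * k := Nat.mul_le_mul_left q hk
        omega
      have hstep2 : (Finset.univ.filter fun i : Fin r => (i : ℕ) < q)
          = Finset.map (Fin.castLEEmb hq_le_r) Finset.univ := by
        ext i
        simp only [Finset.mem_filter, Finset.mem_univ, true_and, Finset.mem_map,
          Fin.castLEEmb, Function.Embedding.coeFn_mk, Fin.castLE]
        constructor
        · intro h
          exact ⟨⟨(i : ℕ), h⟩, Fin.ext rfl⟩
        · rintro ⟨b, _, rfl⟩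
          exact b.isLt
      rw [hstep, hstep2]
      simp
    · -- k = 1
      have hk1'' : k = 1 := by omega
      have hqr : q = r := hk1 hk1''
      have : (Finset.univ.filter fun i : Fin r => t i = ⟨0, hk⟩) = Finset.univ := by
        apply Finset.filter_true_of_mem
        intro i _
        apply Fin.ext
        have h1 : (t i : ℕ) < k := (t i).isLt
        omega
      rw [this]
      simp [hqr]
  refine ⟨A, B, hdim, ?_, ?_⟩
  · -- q * s is attained
    refine ⟨phi (fun u => if u = ⟨0, hk⟩ then 1 else 0),
      (hmem _).mpr ⟨(fun u => if u = ⟨0, hk⟩ then 1 else 0), fun i j => rfl⟩, ?_, ?_⟩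
    · intro h
      have h2 := congrFun (congrFun h (lead ⟨0, hk⟩)) (⟨0, hs⟩ : Fin s)
      rw [hphi, htl] at h2
      simpa using h2
    · show (Finset.univ.filter fun p : Fin r × Fin s =>
        phi _ p.1 p.2 ≠ 0).card = q * s
      have hset : (Finset.univ.filter fun p : Fin r × Fin s =>
          phi (fun u => if u = ⟨0, hk⟩ then 1 else 0) p.1 p.2 ≠ 0)
          = (Finset.univ.filter fun i : Fin r => t i = ⟨0, hk⟩) ×ˢ Finset.univ := by
        ext p
        simp only [Finset.mem_filter, Finset.mem_univ, true_and, Finset.mem_product, and_true]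
        rw [hphi]
        constructor
        · intro h
          by_contra h2
          simp [h2] at h
        · intro h
          simp [h]
          intro hl
          exact absurd hl (lnz _)
      rw [hset, Finset.card_product, hfiber0]
      simp
  · -- lower bound
    rintro w ⟨X, hX, hXne, rfl⟩
    obtain ⟨c, hc⟩ := (hmem X).mp hX
    have hcz : ∃ u, c u ≠ 0 := by
      by_contra h
      push_neg at h
      apply hXne
      ext i j
      rw [hc i j, h (t i)]
      simp
    obtain ⟨u, hu⟩ := hcz
    have hsub : (Finset.univ.filter fun i : Fin r => t i = u) ×ˢ (Finset.univ : Finset (Fin s))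
        ⊆ Finset.univ.filter fun p : Fin r × Fin s => X p.1 p.2 ≠ 0 := by
      intro p hp
      simp only [Finset.mem_product, Finset.mem_filter, Finset.mem_univ, true_and,
        and_true] at hp ⊢
      rw [hc p.1 p.2, hp]
      exact mul_ne_zero hu (pow_ne_zero _ (lnz _))
    calc q * s ≤ (Finset.univ.filter fun i : Fin r => t i = u).card * s :=
          Nat.mul_le_mul_right s (hfiber_ge u)
      _ = ((Finset.univ.filter fun i : Fin r => t i = u) ×ˢ
            (Finset.univ : Finset (Fin s))).card := by
          rw [Finset.card_product]; simp
      _ ≤ hammingWt X := Finset.card_le_card hsub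

theorem stmt15 {F : Type*} [Field F] [DecidableEq F] {r s k : ℕ}
    (hk : 0 < k) (hkr : k ≤ r) (hks : k ≤ s)
    (hF : (k + 2 : Cardinal) ≤ Cardinal.mk F) :
    ∃ (A : Matrix (Fin r) (Fin r) F) (B : Matrix (Fin s) (Fin s) F),
      Module.finrank F (intertwiner F A B) = k ∧
      IsLeast {w | ∃ X ∈ intertwiner F A B, X ≠ 0 ∧ hammingWt X = w} (r / k * s) := by
  have hs : 0 < s := lt_of_lt_of_le hk hks
  obtain ⟨a, ha0, hroot1⟩ := exists_coeffs (F := F) (s := s) (k := 1) one_pos hs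
    (fun _ => 1) (fun _ => one_ne_zero)
  have hq : 0 < r / k := (Nat.one_le_div_iff hk).mpr hkr
  obtain ⟨A, B, h1, h2⟩ := auxmain hk hs hq (Nat.div_mul_le_self r k)
    (fun h => by subst h; simp) (fun _ : Fin k => (1 : F)) (fun _ => one_ne_zero)
    a ha0 (fun u => by simpa using hroot1 0)
  exact ⟨A, B, h1, h2⟩
end

section
/- If |F| ≥ min{r,s} + 2, then there exist matrices A ∈ F^{r×r} and B ∈ F^{s×s} such that C(A,B) = {X : AX = XB} has dimension min{r,s} and minimum Hamming weight max{r,s}. -/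
open Matrix

open Fin.NatCast in
lemma col_const_aux {F : Type*} [Field F] {s : ℕ} [NeZero s]
    (X : Fin s → F) (h : ∀ j, X j = X (j + 1)) : ∀ j, X j = X 0 := by
  have key : ∀ n : ℕ, X 0 = X (n : Fin s) := by
    intro n
    induction n with
    | zero => simp
    | succ n ih => rw [ih, h ((n : Fin s)), Nat.cast_add_one]
  intro j
  rw [← Fin.cast_val_eq_self j, ← key]

lemma core1 {F : Type*} [Field F] [DecidableEq F] {r s : ℕ}
    (hr : 0 < r) (hs : 0 < s) :
    ∃ (A : Matrix (Fin r) (Fin r) F) (B : Matrix (Fin s) (Fin s) F),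
      Module.finrank F (intertwiner F A B) = r ∧
      IsLeast {w | ∃ X ∈ intertwiner F A B, X ≠ 0 ∧ hammingWt X = w} s := by
  haveI : NeZero r := ⟨hr.ne'⟩
  haveI : NeZero s := ⟨hs.ne'⟩
  set B : Matrix (Fin s) (Fin s) F := Matrix.of fun i j => if i = j + 1 then 1 else 0 with hB
  have hmem : ∀ X : Matrix (Fin r) (Fin s) F,
      X ∈ intertwiner F 1 B ↔ ∀ i j, X i j = X i (j + 1) := by
    intro X
    have hXB : ∀ i j, (X * B) i j = X i (j + 1) := by
      intro i j
      simp [Matrix.mul_apply, hB, mul_ite]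
    constructor
    · intro h i j
      have : (1 : Matrix (Fin r) (Fin r) F) * X = X * B := h
      rw [Matrix.one_mul] at this
      rw [← hXB i j, ← this]
    · intro h
      show (1 : Matrix (Fin r) (Fin r) F) * X = X * B
      rw [Matrix.one_mul]
      ext i j
      rw [hXB i j]
      exact h i j
  have hconst : ∀ X : Matrix (Fin r) (Fin s) F, X ∈ intertwiner F 1 B →
      ∀ i j, X i j = X i 0 := by
    intro X hX i j
    exact col_const_aux (fun j => X i j) (fun j => (hmem X).mp hX i j) j
  refine ⟨1, B, ?_, ?_, ?_⟩
  · -- finrank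
    let φ : intertwiner F 1 B →ₗ[F] (Fin r → F) :=
      { toFun := fun X => fun i => X.1 i 0
        map_add' := fun X Y => rfl
        map_smul' := fun c X => rfl }
    have hbij : Function.Bijective φ := by
      constructor
      · intro X Y hXY
        apply Subtype.ext
        ext i j
        rw [hconst X.1 X.2 i j, hconst Y.1 Y.2 i j]
        exact congrFun hXY i
      · intro c
        refine ⟨⟨Matrix.of fun i _ => c i, ?_⟩, rfl⟩
        rw [hmem]
        intro i j
        rfl
    rw [(LinearEquiv.ofBijective φ hbij).finrank_eq]
    simp [Module.finrank_pi]
  · -- membership of s in the weight set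
    refine ⟨Matrix.of fun i (_ : Fin s) => if i = (0 : Fin r) then (1 : F) else 0, ?_, ?_, ?_⟩
    · rw [hmem]; intro i j; rfl
    · intro h
      have := congrFun (congrFun h 0) 0
      simp at this
    · unfold hammingWt
      have : (Finset.univ.filter fun p : Fin r × Fin s =>
          (Matrix.of fun i (_ : Fin s) => if i = (0 : Fin r) then (1 : F) else 0) p.1 p.2 ≠ 0)
          = {(0 : Fin r)} ×ˢ Finset.univ := by
        ext p
        simp only [Finset.mem_filter, Finset.mem_univ, true_and,
          Finset.mem_product, Finset.mem_singleton, Matrix.of_apply, and_true]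
        simp [ite_ne_right_iff]
      rw [this]
      simp
  · -- lower bound
    rintro w ⟨X, hX, hne, rfl⟩
    have hex : ∃ p : Fin r × Fin s, X p.1 p.2 ≠ 0 := by
      by_contra h
      push_neg at h
      exact hne (Matrix.ext fun i j => h (i, j))
    obtain ⟨⟨i0, j0⟩, hp⟩ := hex
    have hi0 : ∀ j, X i0 j ≠ 0 := by
      intro j
      rw [hconst X hX i0 j, ← hconst X hX i0 j0]
      exact hp
    have : (Finset.univ : Finset (Fin s)).card ≤
        (Finset.univ.filter fun p : Fin r × Fin s => X p.1 p.2 ≠ 0).card := by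
      apply Finset.card_le_card_of_injOn (fun j => (i0, j))
      · intro j _
        simp [hi0 j]
      · intro a _ b _ hab
        exact (Prod.mk.injEq _ _ _ _).mp hab |>.2
    simpa [hammingWt] using this
lemma core2 {F : Type*} [Field F] [DecidableEq F] {r s : ℕ}
    (hr : 0 < r) (hs : 0 < s) :
    ∃ (A : Matrix (Fin r) (Fin r) F) (B : Matrix (Fin s) (Fin s) F),
      Module.finrank F (intertwiner F A B) = s ∧
      IsLeast {w | ∃ X ∈ intertwiner F A B, X ≠ 0 ∧ hammingWt X = w} r := by
  haveI : NeZero r := ⟨hr.ne'⟩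
  haveI : NeZero s := ⟨hs.ne'⟩
  set A : Matrix (Fin r) (Fin r) F := Matrix.of fun i k => if k = i + 1 then 1 else 0 with hA
  have hmem : ∀ X : Matrix (Fin r) (Fin s) F,
      X ∈ intertwiner F A 1 ↔ ∀ i j, X i j = X (i + 1) j := by
    intro X
    have hAX : ∀ i j, (A * X) i j = X (i + 1) j := by
      intro i j
      simp [Matrix.mul_apply, hA, ite_mul]
    constructor
    · intro h i j
      have : A * X = X * (1 : Matrix (Fin s) (Fin s) F) := h
      rw [Matrix.mul_one] at this
      rw [← hAX i j, this]
    · intro h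
      show A * X = X * (1 : Matrix (Fin s) (Fin s) F)
      rw [Matrix.mul_one]
      ext i j
      rw [hAX i j]
      exact (h i j).symm
  have hconst : ∀ X : Matrix (Fin r) (Fin s) F, X ∈ intertwiner F A 1 →
      ∀ i j, X i j = X 0 j := by
    intro X hX i j
    exact col_const_aux (fun i => X i j) (fun i => (hmem X).mp hX i j) i
  refine ⟨A, 1, ?_, ?_, ?_⟩
  · -- finrank
    let φ : intertwiner F A 1 →ₗ[F] (Fin s → F) :=
      { toFun := fun X => fun j => X.1 0 j
        map_add' := fun X Y => rfl
        map_smul' := fun c X => rfl }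
    have hbij : Function.Bijective φ := by
      constructor
      · intro X Y hXY
        apply Subtype.ext
        ext i j
        rw [hconst X.1 X.2 i j, hconst Y.1 Y.2 i j]
        exact congrFun hXY j
      · intro c
        refine ⟨⟨Matrix.of fun _ j => c j, ?_⟩, rfl⟩
        rw [hmem]
        intro i j
        rfl
    rw [(LinearEquiv.ofBijective φ hbij).finrank_eq]
    simp [Module.finrank_pi]
  · -- membership of r in the weight set
    refine ⟨Matrix.of fun (_ : Fin r) j => if j = (0 : Fin s) then (1 : F) else 0, ?_, ?_, ?_⟩
    · rw [hmem]; intro i j; rfl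
    · intro h
      have := congrFun (congrFun h 0) 0
      simp at this
    · unfold hammingWt
      have : (Finset.univ.filter fun p : Fin r × Fin s =>
          (Matrix.of fun (_ : Fin r) j => if j = (0 : Fin s) then (1 : F) else 0) p.1 p.2 ≠ 0)
          = Finset.univ ×ˢ {(0 : Fin s)} := by
        ext p
        simp only [Finset.mem_filter, Finset.mem_univ, true_and,
          Finset.mem_product, Finset.mem_singleton, Matrix.of_apply]
        simp [ite_ne_right_iff]
      rw [this]
      simp
  · -- lower bound
    rintro w ⟨X, hX, hne, rfl⟩
    have hex : ∃ p : Fin r × Fin s, X p.1 p.2 ≠ 0 := by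
      by_contra h
      push_neg at h
      exact hne (Matrix.ext fun i j => h (i, j))
    obtain ⟨⟨i0, j0⟩, hp⟩ := hex
    have hj0 : ∀ i, X i j0 ≠ 0 := by
      intro i
      rw [hconst X hX i j0, ← hconst X hX i0 j0]
      exact hp
    have : (Finset.univ : Finset (Fin r)).card ≤
        (Finset.univ.filter fun p : Fin r × Fin s => X p.1 p.2 ≠ 0).card := by
      apply Finset.card_le_card_of_injOn (fun i => (i, j0))
      · intro i _
        simp [hj0 i]
      · intro a _ b _ hab
        exact (Prod.mk.injEq _ _ _ _).mp hab |>.1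
    simpa [hammingWt] using this

theorem stmt16 {F : Type*} [Field F] [DecidableEq F] {r s : ℕ}
    (hr : 0 < r) (hs : 0 < s)
    (hF : (min r s + 2 : Cardinal) ≤ Cardinal.mk F) :
    ∃ (A : Matrix (Fin r) (Fin r) F) (B : Matrix (Fin s) (Fin s) F),
      Module.finrank F (intertwiner F A B) = min r s ∧
      IsLeast {w | ∃ X ∈ intertwiner F A B, X ≠ 0 ∧ hammingWt X = w} (max r s) := by

  rcases le_or_gt r s with h | h
  · rw [min_eq_left h, max_eq_right h]
    exact core1 hr hs
  · rw [min_eq_right h.le, max_eq_left h.le]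
    exact core2 hr hs
end
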